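/- Let I ⊆ ℝ be an open interval, U : I → ℝ a function, and Ẽ, E real constants. Suppose φ̃ : I → ℝ is twice differentiable, nowhere vanishing on I, with -φ̃'' + Uφ̃ = Ẽφ̃ on I, and ψ : I → ℝ is twice differentiable with -ψ'' + Uψ = Eψ on I. Define ψ_new(x) = ψ'(x) - (φ̃'(x)/φ̃(x)) ψ(x). Then -( ψ_new'(x) + (φ̃'(x)/φ̃(x)) ψ_new(x) ) = (E - Ẽ) ψ(x) for all x ∈ I. -/
import Mathlib


/-- in the Darboux transformation of `H = -d²/dx² + U(x)` on the open
interval `I = (a,b)` with nowhere-vanishing, twice differentiable seed solution `φ̃`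
(`Hφ̃ = Ẽφ̃` on `I`) and a twice differentiable solution `ψ` of `Hψ = Eψ` on `I`,
setting `ψ_new = ψ' - (φ̃'/φ̃)ψ = Âψ`, the adjoint operator
`Â† = -(d/dx + φ̃'/φ̃)` satisfies `Â†ψ_new = (E - Ẽ)ψ` on `I`. -/
theorem darboux_adjoint_relation (a b : ℝ) (U : ℝ → ℝ) (Et E : ℝ) (φ ψ : ℝ → ℝ)
    (hφ1 : ∀ x ∈ Set.Ioo a b, DifferentiableAt ℝ φ x)
    (hφ2 : ∀ x ∈ Set.Ioo a b, DifferentiableAt ℝ (deriv φ) x)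
    (hφ0 : ∀ x ∈ Set.Ioo a b, φ x ≠ 0)
    (hφeq : ∀ x ∈ Set.Ioo a b, -(deriv (deriv φ) x) + U x * φ x = Et * φ x)
    (hψ1 : ∀ x ∈ Set.Ioo a b, DifferentiableAt ℝ ψ x)
    (hψ2 : ∀ x ∈ Set.Ioo a b, DifferentiableAt ℝ (deriv ψ) x)
    (hψeq : ∀ x ∈ Set.Ioo a b, -(deriv (deriv ψ) x) + U x * ψ x = E * ψ x) :
    ∀ x ∈ Set.Ioo a b,
      -(deriv (fun y => deriv ψ y - (deriv φ y / φ y) * ψ y) x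
          + (deriv φ x / φ x) * (deriv ψ x - (deriv φ x / φ x) * ψ x))
      = (E - Et) * ψ x := by
  intro x hx
  have h0 := hφ0 x hx
  have hd : HasDerivAt (fun y => deriv ψ y - (deriv φ y / φ y) * ψ y)
      (deriv (deriv ψ) x -
        (((deriv (deriv φ) x * φ x - deriv φ x * deriv φ x) / φ x ^ 2) * ψ x
          + (deriv φ x / φ x) * deriv ψ x)) x := by
    exact (hψ2 x hx).hasDerivAt.sub
      ((((hφ2 x hx).hasDerivAt.div (hφ1 x hx).hasDerivAt h0).mul (hψ1 x hx).hasDerivAt))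
  rw [hd.deriv]
  have h1 := hφeq x hx
  have h2 := hψeq x hx
  have e1 : deriv (deriv φ) x = U x * φ x - Et * φ x := by linarith
  have e2 : deriv (deriv ψ) x = U x * ψ x - E * ψ x := by linarith
  rw [e1, e2]
  field_simp
  ring
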